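/- Let A ∈ ℝ^{m×n} and let (y, z) be a normalized singular vector pair corresponding to the largest singular value λ_max(A), i.e., ‖y‖ = ‖z‖ = 1, Az = λ_max(A)·y and Aᵀy = λ_max(A)·z. Let z⁰ = z_r/‖z_r‖ where z_r is the truncation of z to its r largest-in-magnitude entries (1 ≤ r ≤ n, assuming z_r ≠ 0). Then ‖A z⁰‖ ≥ √(r/n)·λ_max(A). -/

import Mathlib

open Finset

noncomputable def enorm₂ {ι : Type*} [Fintype ι] (x : ι → ℝ) : ℝ :=
  Real.sqrt (∑ i, x i ^ 2)

def dot {ι : Type*} [Fintype ι] (x y : ι → ℝ) : ℝ := ∑ i, x i * y i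

noncomputable def l0 {ι : Type*} [Fintype ι] (x : ι → ℝ) : ℕ :=
  (Finset.univ.filter fun i => x i ≠ 0).card

def IsTrunc {ι : Type*} [Fintype ι] [DecidableEq ι] (a : ι → ℝ) (r : ℕ) (ar : ι → ℝ) : Prop :=
  ∃ S : Finset ι, S.card = r ∧ (∀ i ∈ S, ar i = a i) ∧ (∀ i ∉ S, ar i = 0) ∧
    ∀ i ∈ S, ∀ j ∉ S, |a j| ≤ |a i|

noncomputable def lmax {m n' : Type*} [Fintype m] [Fintype n'] (A : Matrix m n' ℝ) : ℝ :=
  sSup {c | ∃ x : n' → ℝ, enorm₂ x = 1 ∧ c = enorm₂ (A.mulVec x)}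

noncomputable def fnorm {m n' : Type*} [Fintype m] [Fintype n'] (A : Matrix m n' ℝ) : ℝ :=
  Real.sqrt (∑ i, ∑ j, A i j ^ 2)

def tri {n1 n2 n3 : ℕ} (A : Fin n1 → Fin n2 → Fin n3 → ℝ)
    (x : Fin n1 → ℝ) (y : Fin n2 → ℝ) (z : Fin n3 → ℝ) : ℝ :=
  ∑ i, ∑ j, ∑ k, A i j k * x i * y j * z k

def mlin {d : ℕ} {n : Fin d → ℕ} (A : (∀ j, Fin (n j)) → ℝ)
    (x : ∀ j, Fin (n j) → ℝ) : ℝ :=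
  ∑ i, A i * ∏ j, x j (i j)

/-- Lemma 3.2: for a normalized leading singular vector pair (y,z) of A and
z⁰ the normalized r-truncation of z, ‖A z⁰‖ ≥ √(r/n)·λ_max(A). -/
theorem stmt_3 {m n : ℕ} (A : Matrix (Fin m) (Fin n) ℝ)
    (y : Fin m → ℝ) (z : Fin n → ℝ)
    (hy : enorm₂ y = 1) (hz : enorm₂ z = 1)
    (hAz : A.mulVec z = fun i => lmax A * y i)
    (hAty : A.transpose.mulVec y = fun j => lmax A * z j)
    (r : ℕ) (hr1 : 1 ≤ r) (hrn : r ≤ n)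
    (zr : Fin n → ℝ) (htr : IsTrunc z r zr) (hzr : zr ≠ 0) :
    enorm₂ (A.mulVec (fun j => zr j / enorm₂ zr)) ≥ Real.sqrt ((r : ℝ) / n) * lmax A := by
  set L := lmax A with hL
  rcases le_or_gt L 0 with h0 | h0
  · have : Real.sqrt ((r : ℝ) / n) * L ≤ 0 :=
      mul_nonpos_of_nonneg_of_nonpos (Real.sqrt_nonneg _) h0
    exact le_trans this (Real.sqrt_nonneg _)
  obtain ⟨S, hScard, hS1, hS2, hS3⟩ := htr
  have hz2 : ∑ i, z i ^ 2 = 1 := by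
    have := hz
    unfold enorm₂ at this
    nlinarith [Real.sq_sqrt (Finset.sum_nonneg (fun i (_ : i ∈ Finset.univ) => sq_nonneg (z i)))]
  have hy2 : ∑ i, y i ^ 2 = 1 := by
    have := hy
    unfold enorm₂ at this
    nlinarith [Real.sq_sqrt (Finset.sum_nonneg (fun i (_ : i ∈ Finset.univ) => sq_nonneg (y i)))]
  -- zr squared sum equals sum over S of z squared
  have hzr2 : ∑ i, zr i ^ 2 = ∑ i ∈ S, z i ^ 2 := by
    rw [← Finset.sum_subset (Finset.subset_univ S)]
    · exact Finset.sum_congr rfl (fun i hi => by rw [hS1 i hi])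
    · intro i _ hi; rw [hS2 i hi]; ring
  have hnpos : (0:ℝ) < n := by
    have : 0 < n := lt_of_lt_of_le hr1 hrn
    exact_mod_cast this
  -- key: sum over S of z^2 ≥ r/n
  have hkey : (r : ℝ) / n ≤ ∑ i ∈ S, z i ^ 2 := by
    have hcomp : ∀ j ∈ Sᶜ, (r : ℝ) * z j ^ 2 ≤ ∑ i ∈ S, z i ^ 2 := by
      intro j hj
      have hj' : j ∉ S := Finset.mem_compl.mp hj
      have : ∑ i ∈ S, z j ^ 2 ≤ ∑ i ∈ S, z i ^ 2 := by
        refine Finset.sum_le_sum (fun i hi => ?_)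
        have habs := hS3 i hi j hj'
        calc z j ^ 2 = |z j| ^ 2 := (sq_abs _).symm
          _ ≤ |z i| ^ 2 := pow_le_pow_left₀ (abs_nonneg _) habs 2
          _ = z i ^ 2 := sq_abs _
      calc (r : ℝ) * z j ^ 2 = ∑ _i ∈ S, z j ^ 2 := by
            rw [Finset.sum_const, hScard, nsmul_eq_mul]
        _ ≤ ∑ i ∈ S, z i ^ 2 := this
    have h1 : ∑ j ∈ Sᶜ, (r : ℝ) * z j ^ 2 ≤ ∑ j ∈ Sᶜ, ∑ i ∈ S, z i ^ 2 :=
      Finset.sum_le_sum hcomp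
    have hcard : (Sᶜ.card : ℝ) = (n : ℝ) - r := by
      have : Sᶜ.card = n - r := by
        rw [Finset.card_compl, hScard]; simp
      rw [this]
      push_cast [Nat.cast_sub hrn]
      ring
    have hsplit : ∑ i ∈ S, z i ^ 2 + ∑ i ∈ Sᶜ, z i ^ 2 = 1 := by
      rw [Finset.sum_add_sum_compl, hz2]
    have h2 : (r : ℝ) * ∑ j ∈ Sᶜ, z j ^ 2 ≤ ((n:ℝ) - r) * ∑ i ∈ S, z i ^ 2 := by
      rw [← hcard]
      calc (r:ℝ) * ∑ j ∈ Sᶜ, z j ^ 2 = ∑ j ∈ Sᶜ, (r:ℝ) * z j ^ 2 := by rw [Finset.mul_sum]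
        _ ≤ ∑ j ∈ Sᶜ, ∑ i ∈ S, z i ^ 2 := h1
        _ = (Sᶜ.card : ℝ) * ∑ i ∈ S, z i ^ 2 := by rw [Finset.sum_const, nsmul_eq_mul]
    rw [div_le_iff₀ hnpos]
    nlinarith
  -- positivity of enorm₂ zr
  have hzrsq_pos : 0 < ∑ i, zr i ^ 2 := by
    obtain ⟨i, hi⟩ := Function.ne_iff.mp hzr
    have h1 : zr i ^ 2 ≤ ∑ j, zr j ^ 2 :=
      Finset.single_le_sum (fun j _ => sq_nonneg (zr j)) (Finset.mem_univ i)
    have : 0 < zr i ^ 2 := by nlinarith [abs_pos.mpr hi, sq_abs (zr i)]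
    linarith
  set c := enorm₂ zr with hc
  have hcpos : 0 < c := Real.sqrt_pos.mpr hzrsq_pos
  have hcsq : c ^ 2 = ∑ i, zr i ^ 2 := Real.sq_sqrt hzrsq_pos.le
  have hcge : Real.sqrt ((r:ℝ)/n) ≤ c := by
    rw [hc]
    apply Real.sqrt_le_sqrt
    rw [hzr2]; exact hkey
  -- the vector v and the inner product computation
  set v : Fin n → ℝ := fun j => zr j / c with hv
  have hdot : ∑ i, y i * (A.mulVec v) i = L * c := by
    have step1 : ∑ i, y i * (A.mulVec v) i = ∑ j, (A.transpose.mulVec y) j * v j := by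
      simp only [Matrix.mulVec, dotProduct, Matrix.transpose_apply,
        Finset.sum_mul, Finset.mul_sum]
      rw [Finset.sum_comm]
      refine Finset.sum_congr rfl fun j _ => Finset.sum_congr rfl fun i _ => by ring
    rw [step1, hAty]
    have hzzr : ∀ j, z j * zr j = zr j ^ 2 := by
      intro j
      by_cases hj : j ∈ S
      · rw [hS1 j hj]; ring
      · rw [hS2 j hj]; ring
    calc ∑ j, (L * z j) * v j = L * ∑ j, z j * zr j / c := by
          rw [Finset.mul_sum]; congr 1; ext j; rw [hv]; ring
      _ = L * ((∑ j, zr j ^ 2) / c) := by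
          congr 1
          rw [← Finset.sum_div]
          congr 1; exact Finset.sum_congr rfl (fun j _ => by rw [hzzr j])
      _ = L * c := by rw [← hcsq]; field_simp
  -- Cauchy-Schwarz
  have hCS : ∑ i, y i * (A.mulVec v) i ≤ enorm₂ (A.mulVec v) := by
    have h := Finset.sum_mul_sq_le_sq_mul_sq Finset.univ y (A.mulVec v)
    rw [hy2, one_mul] at h
    have h2 : ∑ i, y i * (A.mulVec v) i ≤ |∑ i, y i * (A.mulVec v) i| := le_abs_self _
    calc ∑ i, y i * (A.mulVec v) i ≤ |∑ i, y i * (A.mulVec v) i| := h2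
      _ = Real.sqrt ((∑ i, y i * (A.mulVec v) i)^2) := (Real.sqrt_sq_eq_abs _).symm
      _ ≤ Real.sqrt (∑ i, (A.mulVec v) i ^ 2) := Real.sqrt_le_sqrt h
      _ = enorm₂ (A.mulVec v) := rfl
  have : Real.sqrt ((r:ℝ)/n) * L ≤ L * c := by
    rw [mul_comm (Real.sqrt _) L]
    exact mul_le_mul_of_nonneg_left hcge h0.le
  show enorm₂ (A.mulVec v) ≥ Real.sqrt ((r:ℝ)/n) * L
  calc Real.sqrt ((r:ℝ)/n) * L ≤ L * c := this
    _ = ∑ i, y i * (A.mulVec v) i := hdot.symm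
    _ ≤ enorm₂ (A.mulVec v) := hCS
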